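/- Let C be a coalgebra over a field k. If the convolution algebra C* is left self-injective (i.e. C* is injective as a left module over itself), then the Nakayama functor N_C is exact. -/

import Mathlib

/-!
Statement 2.  Let `C` be a coalgebra over a field `k`.  If the convolution algebra
`C* = Module.Dual k C` is left self-injective (i.e. `C*` is injective as a left module
over itself), then the Nakayama functor `N_C` is exact.

Concrete realisations (over the coalgebra `(C, Δ, ε)`):
* right `C`-comodules, the left `C*`-action `f ⇀ m = m₍₀₎ ⟨f, m₍₁₎⟩` on them, comodule
  morphisms, and the Nakayama functor `N_C M = C ⊗_{C*} M` are as in the paper;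
* `N_C` is exact iff it preserves short exact sequences of comodules;
* left `C*`-modules are vector spaces with a unital associative action of the
  convolution algebra `C*` (the unit of `C*` is the counit `ε`);
* left self-injectivity of `C*` is the extension property of `C*`-linear maps into the
  left regular module `C*` along injective `C*`-linear maps.
-/

open TensorProduct

universe u

namespace Stmt2

variable {k : Type u} [Field k]

section Framework

variable {C : Type u} [AddCommGroup C] [Module k C]

/-- A right comodule structure over the coalgebra `(C, Δ, ε)`. -/
structure ComodStr (Δ : C →ₗ[k] C ⊗[k] C) (ε : C →ₗ[k] k)
    (M : Type u) [AddCommGroup M] [Module k M] where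
  ρ : M →ₗ[k] M ⊗[k] C
  coassoc : (TensorProduct.assoc k M C C).toLinearMap ∘ₗ
      (TensorProduct.map ρ LinearMap.id) ∘ₗ ρ = (TensorProduct.map LinearMap.id Δ) ∘ₗ ρ
  counit : (TensorProduct.rid k M).toLinearMap ∘ₗ
      (TensorProduct.map LinearMap.id ε) ∘ₗ ρ = LinearMap.id

variable (Δ : C →ₗ[k] C ⊗[k] C) (ε : C →ₗ[k] k)

/-- The convolution product on `C* = (C →ₗ[k] k)`. -/
noncomputable def conv (f g : (C →ₗ[k] k)) : (C →ₗ[k] k) :=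
  (TensorProduct.lid k k).toLinearMap ∘ₗ (TensorProduct.map f g) ∘ₗ Δ


theorem conv_add_right (f g₁ g₂ : (C →ₗ[k] k)) :
    conv Δ f (g₁ + g₂) = conv Δ f g₁ + conv Δ f g₂ := by
  simp [conv, TensorProduct.map_add_right, LinearMap.comp_add, LinearMap.add_comp]

theorem conv_smul_right (a : k) (f g : (C →ₗ[k] k)) :
    conv Δ f (a • g) = a • conv Δ f g := by
  simp [conv, TensorProduct.map_smul_right, LinearMap.comp_smul, LinearMap.smul_comp]

theorem conv_zero_right (f : (C →ₗ[k] k)) : conv Δ f 0 = 0 := by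
  have : TensorProduct.map f (0 : (C →ₗ[k] k)) = 0 := by ext x y; simp
  simp [conv, this]

/-- The left action of `C*` on a right `C`-comodule: `f ⇀ m = m₍₀₎ ⟨f, m₍₁₎⟩`. -/
noncomputable def lAct {M : Type u} [AddCommGroup M] [Module k M]
    {ε : C →ₗ[k] k} (s : ComodStr Δ ε M) (f : (C →ₗ[k] k)) : M →ₗ[k] M :=
  (TensorProduct.rid k M).toLinearMap ∘ₗ (TensorProduct.map LinearMap.id f) ∘ₗ s.ρ

/-- The right action of `C*` on `C` itself: `c ↼ f = ⟨f, c₍₁₎⟩ c₍₂₎`. -/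
noncomputable def rAct (f : (C →ₗ[k] k)) : C →ₗ[k] C :=
  (TensorProduct.lid k C).toLinearMap ∘ₗ (TensorProduct.map f LinearMap.id) ∘ₗ Δ

/-- Morphisms of right `C`-comodules. -/
def IsComodHom {M N : Type u} [AddCommGroup M] [Module k M] [AddCommGroup N] [Module k N]
    (s : ComodStr Δ ε M) (t : ComodStr Δ ε N) (φ : M →ₗ[k] N) : Prop :=
  (TensorProduct.map φ LinearMap.id) ∘ₗ s.ρ = t.ρ ∘ₗ φ

variable {M : Type u} [AddCommGroup M] [Module k M]

/-- The balancing relations defining `C ⊗_{C*} M` inside `C ⊗[k] M`. -/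
noncomputable def relators (s : ComodStr Δ ε M) : Submodule k (C ⊗[k] M) :=
  Submodule.span k {x | ∃ (f : (C →ₗ[k] k)) (c : C) (m : M),
    x = (rAct Δ f c) ⊗ₜ[k] m - c ⊗ₜ[k] (lAct Δ s f m)}

/-- The Nakayama functor on objects: `N_C M = C ⊗_{C*} M`. -/
noncomputable def Nak (s : ComodStr Δ ε M) : Type u :=
  (C ⊗[k] M) ⧸ relators Δ ε s

noncomputable instance (s : ComodStr Δ ε M) : AddCommGroup (Nak Δ ε s) :=
  inferInstanceAs (AddCommGroup ((C ⊗[k] M) ⧸ relators Δ ε s))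

noncomputable instance (s : ComodStr Δ ε M) : Module k (Nak Δ ε s) :=
  inferInstanceAs (Module k ((C ⊗[k] M) ⧸ relators Δ ε s))

/-- A comodule morphism is `C*`-equivariant. -/
theorem equivariant_of_isComodHom
    {N : Type u} [AddCommGroup N] [Module k N]
    {s : ComodStr Δ ε M} {t : ComodStr Δ ε N} {φ : M →ₗ[k] N}
    (hφ : IsComodHom Δ ε s t φ) (f : (C →ₗ[k] k)) (m : M) :
    φ (lAct Δ s f m) = lAct Δ t f (φ m) := by
  have h1 : ((TensorProduct.rid k N).toLinearMap ∘ₗ (TensorProduct.map LinearMap.id f)) ∘ₗ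
      (TensorProduct.map φ (LinearMap.id (M := C))) =
      φ ∘ₗ ((TensorProduct.rid k M).toLinearMap ∘ₗ (TensorProduct.map LinearMap.id f)) := by
    apply TensorProduct.ext'
    intro x c
    simp
  have h2 := congrArg (fun (g : M →ₗ[k] N ⊗[k] C) =>
      ((TensorProduct.rid k N).toLinearMap ∘ₗ (TensorProduct.map LinearMap.id f)) ∘ₗ g) hφ
  simp only [← LinearMap.comp_assoc] at h2
  rw [h1] at h2
  have := congrArg (fun g : M →ₗ[k] N => g m) h2
  simpa [lAct, LinearMap.comp_assoc] using this

/-- The map induced by a comodule morphism on Nakayama functors. -/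
noncomputable def nakMap {N : Type u} [AddCommGroup N] [Module k N]
    {s : ComodStr Δ ε M} {t : ComodStr Δ ε N} (φ : M →ₗ[k] N)
    (hφ : IsComodHom Δ ε s t φ) : Nak Δ ε s →ₗ[k] Nak Δ ε t :=
  Submodule.mapQ (relators Δ ε s) (relators Δ ε t)
    (TensorProduct.map LinearMap.id φ)
    (by
      rw [relators, Submodule.span_le]
      rintro x ⟨f, c, m, rfl⟩
      have : (TensorProduct.map (LinearMap.id (M := C)) φ)
          ((rAct Δ f c) ⊗ₜ[k] m - c ⊗ₜ[k] (lAct Δ s f m)) =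
          (rAct Δ f c) ⊗ₜ[k] (φ m) - c ⊗ₜ[k] (lAct Δ t f (φ m)) := by
        simp [map_sub, equivariant_of_isComodHom Δ ε hφ f m]
      simp only [SetLike.mem_coe, Submodule.mem_comap, this]
      exact Submodule.subset_span ⟨f, c, φ m, rfl⟩)

/-- Rational elements of `C*` (for the left regular `C*`-module structure). -/
def IsRational (f : (C →ₗ[k] k)) : Prop :=
  ∃ (n : ℕ) (g : Fin n → (C →ₗ[k] k)) (c : Fin n → C),
    ∀ h : (C →ₗ[k] k), conv Δ h f = ∑ i, h (c i) • g i


/-- `Hom^C(M, C*_ℓ^rat)`: comodule maps from `M` to the rational part of `C*`,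
realised as left `C*`-module maps `M → C*` with rational image. -/
noncomputable def RatHom {M : Type u} [AddCommGroup M] [Module k M]
    (s : ComodStr Δ ε M) : Submodule k (M →ₗ[k] (C →ₗ[k] k)) where
  carrier := {φ | (∀ (f : (C →ₗ[k] k)) (m : M), φ (lAct Δ s f m) = conv Δ f (φ m)) ∧
      ∀ m : M, IsRational Δ (φ m)}
  add_mem' := by
    rintro φ ψ ⟨hφ, hφr⟩ ⟨hψ, hψr⟩
    refine ⟨fun f m => by simp only [LinearMap.add_apply, hφ f m, hψ f m, conv_add_right],
      fun m => ?_⟩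
    obtain ⟨n₁, g₁, c₁, h₁⟩ := hφr m
    obtain ⟨n₂, g₂, c₂, h₂⟩ := hψr m
    refine ⟨n₁ + n₂, Fin.append g₁ g₂, Fin.append c₁ c₂, fun h => ?_⟩
    rw [LinearMap.add_apply, conv_add_right, h₁ h, h₂ h, Fin.sum_univ_add]
    simp [Fin.append_left, Fin.append_right]
  zero_mem' := by
    refine ⟨fun f m => by simp [conv_zero_right], fun m => ?_⟩
    exact ⟨0, ![], ![], fun h => by simp [conv_zero_right]⟩
  smul_mem' := by
    rintro a φ ⟨hφ, hφr⟩
    refine ⟨fun f m => by simp only [LinearMap.smul_apply, hφ f m, conv_smul_right], fun m => ?_⟩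
    obtain ⟨n, g, c, hg⟩ := hφr m
    refine ⟨n, fun i => a • g i, c, fun h' => ?_⟩
    rw [LinearMap.smul_apply, conv_smul_right, hg h', Finset.smul_sum]
    refine Finset.sum_congr rfl fun i _ => ?_
    rw [smul_comm]

/-- `N_C` is the zero functor. -/
def NakayamaZero : Prop :=
  ∀ (M : Type u) [AddCommGroup M] [Module k M] (s : ComodStr Δ ε M)
    (x : Nak Δ ε s), x = 0

/-- `N_C` is an exact functor: it preserves short exact sequences of comodules. -/
def NakayamaExact : Prop :=
  ∀ (M₁ M₂ M₃ : Type u) [AddCommGroup M₁] [Module k M₁] [AddCommGroup M₂] [Module k M₂]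
    [AddCommGroup M₃] [Module k M₃]
    (s₁ : ComodStr Δ ε M₁) (s₂ : ComodStr Δ ε M₂) (s₃ : ComodStr Δ ε M₃)
    (φ : M₁ →ₗ[k] M₂) (ψ : M₂ →ₗ[k] M₃)
    (hφ : IsComodHom Δ ε s₁ s₂ φ) (hψ : IsComodHom Δ ε s₂ s₃ ψ),
    Function.Injective φ → Function.Surjective ψ → Function.Exact φ ψ →
      Function.Injective (nakMap Δ ε φ hφ) ∧ Function.Surjective (nakMap Δ ε ψ hψ) ∧
        Function.Exact (nakMap Δ ε φ hφ) (nakMap Δ ε ψ hψ)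


/-- A left module structure over the convolution algebra `C*`. -/
structure CstarMod (Δ : C →ₗ[k] C ⊗[k] C) (ε : C →ₗ[k] k)
    (M : Type u) [AddCommGroup M] [Module k M] where
  act : (C →ₗ[k] k) → M →ₗ[k] M
  act_add : ∀ f g : (C →ₗ[k] k), act (f + g) = act f + act g
  act_smul : ∀ (a : k) (f : (C →ₗ[k] k)), act (a • f) = a • act f
  act_one : act ε = LinearMap.id
  act_mul : ∀ f g : (C →ₗ[k] k), act (conv Δ f g) = act f ∘ₗ act g

/-- The convolution algebra `C*` is left self-injective: for every injective morphism
`i : M → N` of left `C*`-modules, every `C*`-linear map `M → C*` (with `C*` the left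
regular module, i.e. acting on itself by convolution) extends along `i`. -/
def CstarLeftSelfInjective (Δ : C →ₗ[k] C ⊗[k] C) (ε : C →ₗ[k] k) : Prop :=
  ∀ (M N : Type u) [AddCommGroup M] [Module k M] [AddCommGroup N] [Module k N]
    (sM : CstarMod Δ ε M) (sN : CstarMod Δ ε N) (i : M →ₗ[k] N),
    (∀ (f : (C →ₗ[k] k)) (m : M), i (sM.act f m) = sN.act f (i m)) →
    Function.Injective i →
    ∀ α : M →ₗ[k] (C →ₗ[k] k),
      (∀ (f : (C →ₗ[k] k)) (m : M), α (sM.act f m) = conv Δ f (α m)) →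
      ∃ β : N →ₗ[k] (C →ₗ[k] k),
        (∀ (f : (C →ₗ[k] k)) (n : N), β (sN.act f n) = conv Δ f (β n)) ∧ β ∘ₗ i = α

end Framework

section ProofHelpers

variable {C : Type u} [AddCommGroup C] [Module k C]
variable (Δ : C →ₗ[k] C ⊗[k] C) (ε : C →ₗ[k] k)
variable {M : Type u} [AddCommGroup M] [Module k M]

theorem lAct_add (s : ComodStr Δ ε M) (f g : C →ₗ[k] k) :
    lAct Δ s (f + g) = lAct Δ s f + lAct Δ s g := by
  simp [lAct, TensorProduct.map_add_right, LinearMap.comp_add, LinearMap.add_comp]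

theorem lAct_smul (s : ComodStr Δ ε M) (a : k) (f : C →ₗ[k] k) :
    lAct Δ s (a • f) = a • lAct Δ s f := by
  simp [lAct, TensorProduct.map_smul_right, LinearMap.comp_smul, LinearMap.smul_comp]

theorem lAct_conv (s : ComodStr Δ ε M) (f g : C →ₗ[k] k) :
    lAct Δ s (conv Δ f g) = lAct Δ s f ∘ₗ lAct Δ s g := by
  ext m
  -- key commutation : ρ ∘ (rid ∘ (id ⊗ g)) = rid ∘ (id ⊗ g) ∘ (ρ ⊗ id)
  have key : s.ρ ∘ₗ ((TensorProduct.rid k M).toLinearMap ∘ₗ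
        TensorProduct.map LinearMap.id g)
      = (TensorProduct.rid k (M ⊗[k] C)).toLinearMap ∘ₗ
        TensorProduct.map LinearMap.id g ∘ₗ TensorProduct.map s.ρ LinearMap.id := by
    apply TensorProduct.ext'
    intro m c
    simp [TensorProduct.smul_tmul', map_smul]
  have hco := LinearMap.congr_fun s.coassoc m
  simp only [LinearMap.comp_apply, LinearEquiv.coe_coe] at hco
  have hco' : (TensorProduct.map s.ρ LinearMap.id) (s.ρ m)
      = (TensorProduct.assoc k M C C).symm ((TensorProduct.map LinearMap.id Δ) (s.ρ m)) := by
    rw [← hco]; simp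
  have hL : (TensorProduct.rid k M).toLinearMap ∘ₗ TensorProduct.map LinearMap.id (conv Δ f g)
      = ((TensorProduct.rid k M).toLinearMap ∘ₗ
          TensorProduct.map LinearMap.id
            ((TensorProduct.lid k k).toLinearMap ∘ₗ TensorProduct.map f g)) ∘ₗ
          TensorProduct.map LinearMap.id Δ := by
    apply TensorProduct.ext'
    intro m c
    simp [conv]
  have hR : (TensorProduct.rid k M).toLinearMap ∘ₗ TensorProduct.map LinearMap.id f ∘ₗ
        (TensorProduct.rid k (M ⊗[k] C)).toLinearMap ∘ₗ TensorProduct.map LinearMap.id g ∘ₗ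
        (TensorProduct.assoc k M C C).symm.toLinearMap
      = (TensorProduct.rid k M).toLinearMap ∘ₗ
          TensorProduct.map LinearMap.id
            ((TensorProduct.lid k k).toLinearMap ∘ₗ TensorProduct.map f g) := by
    apply TensorProduct.ext'
    intro m t
    induction t using TensorProduct.induction_on with
    | zero => simp
    | tmul c c' =>
        simp [TensorProduct.assoc_symm_tmul, TensorProduct.smul_tmul', smul_smul, mul_comm]
    | add x y hx hy =>
        simp only [TensorProduct.tmul_add, map_add] at hx hy ⊢
        rw [hx, hy]
  have e1 : lAct Δ s (conv Δ f g) m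
      = (TensorProduct.rid k M)
          ((TensorProduct.map LinearMap.id
              ((TensorProduct.lid k k).toLinearMap ∘ₗ TensorProduct.map f g))
            ((TensorProduct.map LinearMap.id Δ) (s.ρ m))) := by
    have := LinearMap.congr_fun hL (s.ρ m)
    simpa [lAct] using this
  have e2 : lAct Δ s f (lAct Δ s g m)
      = (TensorProduct.rid k M)
          ((TensorProduct.map LinearMap.id
              ((TensorProduct.lid k k).toLinearMap ∘ₗ TensorProduct.map f g))
            ((TensorProduct.map LinearMap.id Δ) (s.ρ m))) := by
    have hk := LinearMap.congr_fun key (s.ρ m)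
    simp only [LinearMap.comp_apply, LinearEquiv.coe_coe] at hk
    have hr := LinearMap.congr_fun hR ((TensorProduct.map LinearMap.id Δ) (s.ρ m))
    simp only [LinearMap.comp_apply, LinearEquiv.coe_coe] at hr
    rw [← hr]
    simp only [lAct, LinearMap.comp_apply, LinearEquiv.coe_coe]
    rw [hk, hco']
  rw [LinearMap.comp_apply, e1, e2]

/-- The `C*`-module structure on a comodule. -/
noncomputable def comodCstarMod (s : ComodStr Δ ε M) : CstarMod Δ ε M where
  act := lAct Δ s
  act_add := lAct_add Δ ε s
  act_smul := lAct_smul Δ ε s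
  act_one := s.counit
  act_mul := lAct_conv Δ ε s

theorem apply_rAct (f g : C →ₗ[k] k) (c : C) : g (rAct Δ f c) = conv Δ f g c := by
  have h : g ∘ₗ ((TensorProduct.lid k C).toLinearMap ∘ₗ TensorProduct.map f LinearMap.id)
      = (TensorProduct.lid k k).toLinearMap ∘ₗ TensorProduct.map f g := by
    apply TensorProduct.ext'
    intro a b
    simp
  have := LinearMap.congr_fun h (Δ c)
  simpa [rAct, conv] using this

/-- The linear map `M → C*` associated with a functional on `C ⊗ M`. -/
noncomputable def dualToHom (γ : (C ⊗[k] M) →ₗ[k] k) : M →ₗ[k] (C →ₗ[k] k) where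
  toFun m := γ ∘ₗ ((TensorProduct.mk k C M).flip m)
  map_add' m₁ m₂ := by ext c; simp [TensorProduct.tmul_add]
  map_smul' a m := by ext c; simp [TensorProduct.tmul_smul]

@[simp] theorem dualToHom_apply (γ : (C ⊗[k] M) →ₗ[k] k) (m : M) (c : C) :
    dualToHom γ m c = γ (c ⊗ₜ[k] m) := rfl

theorem relators_le_ker (s : ComodStr Δ ε M) (β : M →ₗ[k] (C →ₗ[k] k))
    (hβ : ∀ (f : C →ₗ[k] k) (m : M), β (lAct Δ s f m) = conv Δ f (β m)) :
    relators Δ ε s ≤ LinearMap.ker (TensorProduct.lift β.flip) := by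
  rw [relators, Submodule.span_le]
  rintro x ⟨f, c, m, rfl⟩
  simp only [SetLike.mem_coe, LinearMap.mem_ker, map_sub, TensorProduct.lift.tmul,
    LinearMap.flip_apply]
  rw [apply_rAct, hβ, sub_self]

theorem nakMap_mk {N : Type u} [AddCommGroup N] [Module k N]
    {s : ComodStr Δ ε M} {t : ComodStr Δ ε N} (φ : M →ₗ[k] N)
    (hφ : IsComodHom Δ ε s t φ) (z : C ⊗[k] M) :
    nakMap Δ ε φ hφ (Submodule.Quotient.mk z)
      = (Submodule.Quotient.mk ((TensorProduct.map LinearMap.id φ) z) : Nak Δ ε t) :=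
  Submodule.mapQ_apply _ _ _ _

end ProofHelpers

/-- Lemma `Nakayama-dual-self-injective`:  if the convolution algebra
`C*` is left self-injective then the Nakayama functor `N_C` is exact. -/
theorem nakayama_exact_of_self_injective
    (C : Type u) [AddCommGroup C] [Module k C] [Coalgebra k C]
    (h : CstarLeftSelfInjective (Coalgebra.comul (R := k) (A := C)) Coalgebra.counit) :
    NakayamaExact (Coalgebra.comul (R := k) (A := C)) Coalgebra.counit := by
  set Δ : C →ₗ[k] C ⊗[k] C := Coalgebra.comul (R := k) (A := C) with hΔ
  set ε : C →ₗ[k] k := Coalgebra.counit (R := k) (A := C) with hε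
  intro M₁ M₂ M₃ _ _ _ _ _ _ s₁ s₂ s₃ φ ψ hφ hψ hinjφ hsurjψ hexact
  have hψφ : ∀ m, ψ (φ m) = 0 := fun m => hexact.apply_apply_eq_zero m
  refine ⟨?_, ?_, ?_⟩
  · -- injectivity of `N(φ)`, using self-injectivity of `C*`
    have hker : ∀ x, nakMap Δ ε φ hφ x = 0 → x = 0 := by
      intro x hx
      obtain ⟨z, rfl⟩ := Submodule.Quotient.mk_surjective (relators Δ ε s₁) x
      rw [nakMap_mk] at hx
      replace hx := (Submodule.Quotient.mk_eq_zero (relators Δ ε s₂)).mp hx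
      refine (Module.forall_dual_apply_eq_zero_iff k
        (Submodule.Quotient.mk z : (C ⊗[k] M₁) ⧸ relators Δ ε s₁)).mp ?_
      intro γbar
      set γ : (C ⊗[k] M₁) →ₗ[k] k := γbar ∘ₗ (relators Δ ε s₁).mkQ with hγ
      have hγrel : ∀ w ∈ relators Δ ε s₁, γ w = 0 := by
        intro w hw
        have hw0 : (relators Δ ε s₁).mkQ w = 0 := by
          rw [Submodule.mkQ_apply, Submodule.Quotient.mk_eq_zero]; exact hw
        show γbar ((relators Δ ε s₁).mkQ w) = 0
        exact (congrArg (fun t => γbar t) hw0).trans (map_zero γbar)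
      have hαequiv : ∀ (f : C →ₗ[k] k) (m : M₁),
          dualToHom (M := M₁) γ (lAct Δ s₁ f m) = conv Δ f (dualToHom γ m) := by
        intro f m
        ext c
        have hrel : (rAct Δ f c) ⊗ₜ[k] m - c ⊗ₜ[k] (lAct Δ s₁ f m) ∈ relators Δ ε s₁ :=
          Submodule.subset_span ⟨f, c, m, rfl⟩
        have := hγrel _ hrel
        rw [map_sub] at this
        have h2 : γ (c ⊗ₜ[k] lAct Δ s₁ f m) = γ ((rAct Δ f c) ⊗ₜ[k] m) := by
          rw [← sub_eq_zero]
          rw [sub_eq_zero]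
          exact (sub_eq_zero.mp this).symm
        rw [dualToHom_apply, h2, ← apply_rAct Δ f (dualToHom γ m) c, dualToHom_apply]
      obtain ⟨β, hβequiv, hβφ⟩ := h M₁ M₂ (comodCstarMod Δ ε s₁) (comodCstarMod Δ ε s₂) φ
        (fun f m => equivariant_of_isComodHom Δ ε hφ f m) hinjφ (dualToHom γ) hαequiv
      have hδrel := relators_le_ker Δ ε s₂ β hβequiv
      have hδz : TensorProduct.lift β.flip ((TensorProduct.map LinearMap.id φ) z) = 0 :=
        hδrel hx
      have hcomp : (TensorProduct.lift β.flip) ∘ₗ (TensorProduct.map LinearMap.id φ) = γ := by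
        apply TensorProduct.ext'
        intro c m
        simp only [LinearMap.comp_apply, TensorProduct.map_tmul, LinearMap.id_coe, id_eq,
          TensorProduct.lift.tmul, LinearMap.flip_apply]
        have := LinearMap.congr_fun hβφ m
        simp only [LinearMap.comp_apply] at this
        rw [this, dualToHom_apply]
      have : γ z = 0 := by rw [← hcomp]; exact hδz
      simpa [hγ] using this
    intro a b hab
    have : nakMap Δ ε φ hφ (a - b) = 0 := by rw [map_sub, hab, sub_self]
    exact sub_eq_zero.mp (hker _ this)
  · -- surjectivity of `N(ψ)`
    intro y
    obtain ⟨z, rfl⟩ := Submodule.Quotient.mk_surjective (relators Δ ε s₃) y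
    obtain ⟨w, hw⟩ := LinearMap.lTensor_surjective C hsurjψ z
    refine ⟨Submodule.Quotient.mk w, ?_⟩
    rw [nakMap_mk]
    exact congrArg _ hw
  · -- exactness in the middle
    intro y
    constructor
    · intro hy
      obtain ⟨z, hz⟩ := Submodule.Quotient.mk_surjective (relators Δ ε s₂) y
      subst hz
      rw [nakMap_mk] at hy
      replace hy := (Submodule.Quotient.mk_eq_zero (relators Δ ε s₃)).mp hy
      have hsub : relators Δ ε s₃ ≤
          Submodule.map (TensorProduct.map LinearMap.id ψ) (relators Δ ε s₂) := by
        rw [relators, Submodule.span_le]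
        rintro x ⟨f, c, m, rfl⟩
        obtain ⟨m', rfl⟩ := hsurjψ m
        refine ⟨(rAct Δ f c) ⊗ₜ[k] m' - c ⊗ₜ[k] (lAct Δ s₂ f m'),
          Submodule.subset_span ⟨f, c, m', rfl⟩, ?_⟩
        simp [map_sub, equivariant_of_isComodHom Δ ε hψ]
      obtain ⟨w, hw, hwz⟩ := hsub hy
      have hker2 : LinearMap.lTensor C ψ (z - w) = 0 := by
        have : LinearMap.lTensor C ψ w = LinearMap.lTensor C ψ z := hwz
        rw [map_sub, this, sub_self]
      have hex := lTensor_exact C hexact hsurjψ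
      obtain ⟨u, hu⟩ := (hex (z - w)).mp hker2
      refine ⟨Submodule.Quotient.mk u, ?_⟩
      rw [nakMap_mk]
      have : (TensorProduct.map LinearMap.id φ) u = z - w := hu
      rw [this]
      rw [show (Submodule.Quotient.mk (z - w) : Nak Δ ε s₂)
          = Submodule.Quotient.mk z - Submodule.Quotient.mk w from
        Submodule.Quotient.mk_sub _]
      rw [(Submodule.Quotient.mk_eq_zero (relators Δ ε s₂)).mpr hw, sub_zero]
    · rintro ⟨x, rfl⟩
      obtain ⟨u, rfl⟩ := Submodule.Quotient.mk_surjective (relators Δ ε s₁) x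
      rw [nakMap_mk, nakMap_mk]
      refine (Submodule.Quotient.mk_eq_zero (relators Δ ε s₃)).mpr ?_
      have hmap : (TensorProduct.map LinearMap.id ψ)
          ((TensorProduct.map (LinearMap.id (M := C)) φ) u) = 0 := by
        have hzero : (TensorProduct.map (LinearMap.id (M := C)) ψ) ∘ₗ
            (TensorProduct.map (LinearMap.id (M := C)) φ) = 0 := by
          apply TensorProduct.ext'
          intro c m
          simp [hψφ m]
        have := LinearMap.congr_fun hzero u
        simpa using this
      rw [hmap]
      exact Submodule.zero_mem _

end Stmt2
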